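/- arXiv:2311.05505 — 3 statements merged into one kernel-verified Lean document; each statement's English description precedes it below -/
import Mathlib

section
/- If G is a graph in the class 𝓗 with respect to a path P = uvz (so G is a 2-connected, k-regular graph on 2q+1 vertices for some q ≥ k, with the sets X, Y as in the definition of 𝓗), then no Hamiltonian cycle of G contains the path P. In particular, the bound 2k on the number of vertices in the statement 'every 2-connected, k-regular graph on at most 2k vertices has a Hamiltonian cycle through any 2-path P with {u,v,z} not a cut-set' is sharp. -/
open SimpleGraph

/-- A graph is `m`-connected if it has more than `m` vertices and deleting any set of
fewer than `m` vertices leaves a connected graph. -/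
def IsKConnected {V : Type*} [Fintype V] (m : ℕ) (G : SimpleGraph V) : Prop :=
  m + 1 ≤ Fintype.card V ∧ ∀ S : Set V, Nat.card S < m → (G.induce Sᶜ).Connected

/-- `G` belongs to the class `𝓗` with respect to the path `P = uvz`:
for some positive integer `q ≥ k`, `G` is a `2`-connected, `k`-regular graph on `2q + 1`
vertices containing two disjoint vertex sets `X` and `Y` such that `Y` is independent,
`{u, v, z} ⊆ X`, `|Y| = q`, `|X| = q + 1`, every neighbour of every vertex of `Y` lies
in `X`, and `v` is adjacent to `u` and `z`. -/
def InClassH {V : Type*} [Fintype V] (G : SimpleGraph V) [DecidableRel G.Adj]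
    (k : ℕ) (u v z : V) : Prop :=
  ∃ q : ℕ, 1 ≤ q ∧ k ≤ q ∧ Fintype.card V = 2 * q + 1 ∧
    IsKConnected 2 G ∧ G.IsRegularOfDegree k ∧
    ∃ X Y : Set V, Disjoint X Y ∧
      (∀ a ∈ Y, ∀ b ∈ Y, ¬ G.Adj a b) ∧
      u ∈ X ∧ v ∈ X ∧ z ∈ X ∧
      Nat.card Y = q ∧ Nat.card X = q + 1 ∧
      (∀ a ∈ Y, ∀ b : V, G.Adj a b → b ∈ X) ∧
      G.Adj v u ∧ G.Adj v z

/-- In a cycle, every vertex of the support is incident to two distinct edges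
of the cycle. -/
lemma two_incident_edges {V : Type*} {G : SimpleGraph V} {a : V} {c : G.Walk a a}
    (hc : c.IsCycle) {y : V} (hy : y ∈ c.support) :
    ∃ e₁ e₂ : Sym2 V, e₁ ∈ c.edges ∧ e₂ ∈ c.edges ∧ e₁ ≠ e₂ ∧ y ∈ e₁ ∧ y ∈ e₂ := by
  classical
  set c' := c.rotate y hy with hc'def
  have hc' : c'.IsCycle := hc.rotate hy
  have hperm : c'.edges ~r c.edges := c.rotate_edges y hy
  have hmem : ∀ e, e ∈ c'.edges → e ∈ c.edges := fun e he => (hperm.perm.mem_iff).mp he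
  have hlen : 3 ≤ c'.length := hc'.three_le_length
  have hnil : ¬ c'.Nil := by
    rw [SimpleGraph.Walk.not_nil_iff_lt_length]; omega
  obtain ⟨b, hab, p, hp⟩ := SimpleGraph.Walk.not_nil_iff.mp hnil
  have hplen : 0 < p.length := by
    have : c'.length = p.length + 1 := by rw [hp]; simp
    omega
  have hpnil : ¬ p.Nil := by rw [SimpleGraph.Walk.not_nil_iff_lt_length]; exact hplen
  have hrnil : ¬ p.reverse.Nil := by
    rw [SimpleGraph.Walk.not_nil_iff_lt_length]; simpa using hplen
  obtain ⟨b', hab', p', hp'⟩ := SimpleGraph.Walk.not_nil_iff.mp hrnil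
  refine ⟨s(y, b), s(y, b'), ?_, ?_, ?_, ?_, ?_⟩
  · apply hmem; rw [hp]; simp
  · apply hmem
    rw [hp]
    have : s(y, b') ∈ p.reverse.edges := by rw [hp']; simp
    rw [SimpleGraph.Walk.edges_reverse] at this
    simp only [SimpleGraph.Walk.edges_cons, List.mem_cons]
    right; exact List.mem_reverse.mp this
  · -- s(y,b) is not in p.edges (trail nodup), but s(y,b') is
    intro h
    have hnodup : c'.edges.Nodup := hc'.edges_nodup
    rw [hp] at hnodup
    simp only [SimpleGraph.Walk.edges_cons, List.nodup_cons] at hnodup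
    apply hnodup.1
    rw [h]
    have : s(y, b') ∈ p.reverse.edges := by rw [hp']; simp
    rw [SimpleGraph.Walk.edges_reverse] at this
    exact List.mem_reverse.mp this
  · exact Sym2.mem_mk_left _ _
  · exact Sym2.mem_mk_left _ _

/-- **Sharpness of the bound `2k`.** If `G` belongs to the class `𝓗` with respect to a
2-path `P = uvz`, then no Hamiltonian cycle of `G` contains the path `P`. -/
theorem statement7 {V : Type*} [Fintype V] [DecidableEq V]
    (G : SimpleGraph V) [DecidableRel G.Adj] (k : ℕ)
    (u v z : V) (huv : G.Adj u v) (hvz : G.Adj v z) (huz : u ≠ z)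
    (hH : InClassH G k u v z) :
    ¬ ∃ (a : V) (c : G.Walk a a),
        c.IsHamiltonianCycle ∧ s(u, v) ∈ c.edges ∧ s(v, z) ∈ c.edges := by
  classical
  rintro ⟨a, c, hc, he1, he2⟩
  obtain ⟨q, hq1, hkq, hcard, -, -, X, Y, hXY, hYind, huX, hvX, hzX, hYcard, hXcard, -, -, -⟩ := hH
  -- The edge finset of the cycle
  set S : Finset (Sym2 V) := c.edges.toFinset with hS
  have hSnodup : c.edges.Nodup := hc.isCycle.edges_nodup
  have hScard : S.card = 2 * q + 1 := by
    rw [hS, List.toFinset_card_of_nodup hSnodup, SimpleGraph.Walk.length_edges,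
      hc.length_eq, hcard]
  -- choose two distinct incident edges for each vertex
  have hall : ∀ y : V, ∃ e₁ e₂ : Sym2 V, e₁ ∈ c.edges ∧ e₂ ∈ c.edges ∧ e₁ ≠ e₂ ∧
      y ∈ e₁ ∧ y ∈ e₂ := fun y => two_incident_edges hc.isCycle (hc.mem_support y)
  choose f g hf hg hfg hyf hyg using hall
  -- the finset of Y as a finset
  set Yf : Finset V := Y.toFinset with hYf
  have hYfcard : Yf.card = q := by
    rw [hYf, Set.toFinset_card, ← Nat.card_eq_fintype_card, hYcard]
  -- the union of the pairs over Y
  set B : Finset (Sym2 V) := Yf.biUnion (fun y => {f y, g y}) with hB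
  have hpair : ∀ y, ({f y, g y} : Finset (Sym2 V)).card = 2 := by
    intro y
    rw [Finset.card_insert_of_notMem (by simpa using hfg y), Finset.card_singleton]
  have hdisj : ∀ y ∈ Yf, ∀ y' ∈ Yf, y ≠ y' →
      Disjoint ({f y, g y} : Finset (Sym2 V)) {f y', g y'} := by
    intro y hy y' hy' hne
    rw [Finset.disjoint_left]
    intro e he he'
    have hye : y ∈ e := by
      simp only [Finset.mem_insert, Finset.mem_singleton] at he
      rcases he with rfl | rfl
      exacts [hyf y, hyg y]
    have hy'e : y' ∈ e := by
      simp only [Finset.mem_insert, Finset.mem_singleton] at he'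
      rcases he' with rfl | rfl
      exacts [hyf y', hyg y']
    have heYY : e = s(y, y') :=
      Sym2.eq_of_ne_mem hne hye hy'e (Sym2.mem_mk_left _ _) (Sym2.mem_mk_right _ _)
    have hemem : e ∈ c.edges := by
      simp only [Finset.mem_insert, Finset.mem_singleton] at he
      rcases he with rfl | rfl
      exacts [hf y, hg y]
    rw [heYY] at hemem
    exact hYind y (by simpa [hYf, Set.mem_toFinset] using hy) y'
      (by simpa [hYf, Set.mem_toFinset] using hy') (c.adj_of_mem_edges hemem)
  have hBcard : B.card = 2 * q := by
    rw [hB, Finset.card_biUnion hdisj]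
    simp only [hpair]
    rw [Finset.sum_const, smul_eq_mul, hYfcard, Nat.mul_comm]
  have hBsub : B ⊆ S := by
    intro e he
    rw [hB, Finset.mem_biUnion] at he
    obtain ⟨y, -, he⟩ := he
    simp only [Finset.mem_insert, Finset.mem_singleton] at he
    rw [hS, List.mem_toFinset]
    rcases he with rfl | rfl
    exacts [hf y, hg y]
  -- the two path edges are not in B
  have hnotB : ∀ e : Sym2 V, (∀ x ∈ e, x ∈ X) → e ∉ B := by
    intro e hx he
    rw [hB, Finset.mem_biUnion] at he
    obtain ⟨y, hy, he⟩ := he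
    have hyY : y ∈ Y := by simpa [hYf, Set.mem_toFinset] using hy
    have hye : y ∈ e := by
      simp only [Finset.mem_insert, Finset.mem_singleton] at he
      rcases he with rfl | rfl
      exacts [hyf y, hyg y]
    exact (Set.disjoint_left.mp hXY (hx y hye)) hyY
  have h1B : s(u, v) ∉ B := by
    apply hnotB
    intro x hx
    rcases Sym2.mem_iff.mp hx with rfl | rfl
    exacts [huX, hvX]
  have h2B : s(v, z) ∉ B := by
    apply hnotB
    intro x hx
    rcases Sym2.mem_iff.mp hx with rfl | rfl
    exacts [hvX, hzX]
  have h12 : s(u, v) ≠ s(v, z) := by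
    intro h
    rw [Sym2.eq_iff] at h
    rcases h with ⟨rfl, -⟩ | ⟨h', -⟩
    · exact G.irrefl huv
    · exact huz h'
  -- now count
  have hsub2 : insert s(u, v) {s(v, z)} ∪ B ⊆ S := by
    apply Finset.union_subset _ hBsub
    intro e he
    simp only [Finset.mem_insert, Finset.mem_singleton] at he
    rw [hS, List.mem_toFinset]
    rcases he with rfl | rfl
    exacts [he1, he2]
  have hdisj2 : Disjoint (insert s(u, v) {s(v, z)} : Finset (Sym2 V)) B := by
    rw [Finset.disjoint_left]
    intro e he
    simp only [Finset.mem_insert, Finset.mem_singleton] at he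
    rcases he with rfl | rfl
    exacts [h1B, h2B]
  have hcard2 : (insert s(u, v) {s(v, z)} : Finset (Sym2 V)).card = 2 := by
    rw [Finset.card_insert_of_notMem (by simpa using h12), Finset.card_singleton]
  have := Finset.card_le_card hsub2
  rw [Finset.card_union_of_disjoint hdisj2, hcard2, hBcard, hScard] at this
  omega
end

section
/- For every k ≥ 3, let H₁ and H₂ be two disjoint copies of the graph obtained from the complete graph K_{k+1} by deleting one edge aᵢbᵢ (i = 1, 2), and let G be the graph obtained from H₁ ∪ H₂ by adding the edges a₁a₂ and b₁b₂. Then G is a 2-connected, k-regular graph on 2k+2 vertices, and there exists a path P = uvz of length 2 in G such that G - {u, v, z} is connected but no Hamiltonian cycle of G contains P. Hence the bound 2k+1 in Theorem 1.5 is sharp. -/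
open SimpleGraph

/-- The graph obtained from two disjoint copies `H₁, H₂` of `K_{k+1}` minus an edge
`aᵢbᵢ` (here `aᵢ = (i, 0)` and `bᵢ = (i, 1)`) by adding the edges `a₁a₂` and `b₁b₂`. -/
def sharpGraph (k : ℕ) : SimpleGraph (Fin 2 × Fin (k + 1)) :=
  SimpleGraph.fromRel (fun x y =>
    (x.1 = y.1 ∧ ¬(x.2.val ≤ 1 ∧ y.2.val ≤ 1)) ∨
    (x.1 ≠ y.1 ∧ x.2 = y.2 ∧ x.2.val ≤ 1))

noncomputable instance (k : ℕ) : DecidableRel (sharpGraph k).Adj :=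
  Classical.decRel _


lemma sharp_adj {k : ℕ} {x y : Fin 2 × Fin (k + 1)} :
    (sharpGraph k).Adj x y ↔ x ≠ y ∧
      ((x.1 = y.1 ∧ (2 ≤ x.2.val ∨ 2 ≤ y.2.val)) ∨
       (x.1 ≠ y.1 ∧ x.2 = y.2 ∧ x.2.val ≤ 1)) := by
  simp only [sharpGraph, fromRel_adj]
  constructor <;> rintro ⟨hne, h⟩ <;> refine ⟨hne, ?_⟩
  · rcases h with (⟨h1, h2⟩ | ⟨h1, h2, h3⟩) | (⟨h1, h2⟩ | ⟨h1, h2, h3⟩)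
    · exact Or.inl ⟨h1, by omega⟩
    · exact Or.inr ⟨h1, h2, h3⟩
    · exact Or.inl ⟨h1.symm, by omega⟩
    · exact Or.inr ⟨h1.symm, h2.symm, h2 ▸ h3⟩
  · rcases h with ⟨h1, h2⟩ | ⟨h1, h2, h3⟩
    · exact Or.inl (Or.inl ⟨h1, by omega⟩)
    · exact Or.inl (Or.inr ⟨h1, h2, h3⟩)
lemma adj_same {k : ℕ} {i : Fin 2} {j j' : Fin (k + 1)} (h : j ≠ j')
    (h2 : 2 ≤ j.val ∨ 2 ≤ j'.val) : (sharpGraph k).Adj (i, j) (i, j') := by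
  rw [sharp_adj]
  exact ⟨fun hc => h (congrArg Prod.snd hc), Or.inl ⟨rfl, h2⟩⟩

lemma adj_cross {k : ℕ} {i i' : Fin 2} {j : Fin (k + 1)} (h : i ≠ i') (hj : j.val ≤ 1) :
    (sharpGraph k).Adj (i, j) (i', j) := by
  rw [sharp_adj]
  exact ⟨fun hc => h (congrArg Prod.fst hc), Or.inr ⟨h, rfl, hj⟩⟩

lemma sharp_regular {k : ℕ} (hk : 3 ≤ k) : (sharpGraph k).IsRegularOfDegree k := by
  classical
  rintro ⟨i, j⟩
  rw [← card_neighborFinset_eq_degree]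
  by_cases hj : 2 ≤ j.val
  · have hset : (sharpGraph k).neighborFinset (i, j) = {i} ×ˢ ({j}ᶜ : Finset (Fin (k+1))) := by
      ext x
      simp only [mem_neighborFinset, sharp_adj, Finset.mem_product, Finset.mem_singleton,
        Finset.mem_compl]
      constructor
      · rintro ⟨hne, ⟨h1, _⟩ | ⟨h1, h2, h3⟩⟩
        · refine ⟨h1.symm, fun hc => hne ?_⟩
          rw [Prod.ext_iff]
          exact ⟨h1, hc.symm⟩
        · omega
      · rintro ⟨h1, h2⟩
        exact ⟨fun hc => h2 (congrArg Prod.snd hc).symm, Or.inl ⟨h1.symm, Or.inl hj⟩⟩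
    rw [hset, Finset.card_product, Finset.card_singleton, Finset.card_compl,
      Finset.card_singleton, Fintype.card_fin]
    omega
  · have h01 : (⟨1 - i.val, by omega⟩ : Fin 2) ≠ i := by
      have := i.isLt
      intro hc
      rw [Fin.ext_iff] at hc
      simp only at hc
      omega
    have hset : (sharpGraph k).neighborFinset (i, j) =
        insert ((⟨1 - i.val, by omega⟩ : Fin 2), j)
          ({i} ×ˢ (Finset.univ.filter fun t : Fin (k+1) => 2 ≤ t.val)) := by
      ext x
      simp only [mem_neighborFinset, sharp_adj, Finset.mem_insert, Finset.mem_product,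
        Finset.mem_singleton, Finset.mem_filter, Finset.mem_univ, true_and]
      constructor
      · rintro ⟨hne, ⟨h1, h2⟩ | ⟨h1, h2, h3⟩⟩
        · exact Or.inr ⟨h1.symm, by omega⟩
        · refine Or.inl ?_
          have hx1 : x.1 = (⟨1 - i.val, by omega⟩ : Fin 2) := by
            have hv : i.val ≠ x.1.val := fun hc => h1 (Fin.ext hc)
            have := x.1.isLt; have := i.isLt
            rw [Fin.ext_iff]; omega
          rw [Prod.ext_iff]
          exact ⟨hx1, h2.symm⟩
      · rintro (rfl | ⟨h1, h2⟩)
        · refine ⟨fun hc => h01 (congrArg Prod.fst hc).symm, Or.inr ⟨?_, rfl, by omega⟩⟩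
          exact fun hc => h01 hc.symm
        · refine ⟨fun hc => ?_, Or.inl ⟨h1.symm, Or.inr h2⟩⟩
          cases hc
          exact hj h2
    have hnotmem : ((⟨1 - i.val, by omega⟩ : Fin 2), j) ∉
        ({i} ×ˢ (Finset.univ.filter fun t : Fin (k+1) => 2 ≤ t.val)) := by
      simp only [Finset.mem_product, Finset.mem_singleton, Finset.mem_filter]
      rintro ⟨hc, -⟩
      exact h01 hc
    have hcard : (Finset.univ.filter fun t : Fin (k+1) => 2 ≤ t.val).card = k - 1 := by
      have : (Finset.univ.filter fun t : Fin (k+1) => ¬ 2 ≤ t.val) =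
          {(⟨0, by omega⟩ : Fin (k+1)), ⟨1, by omega⟩} := by
        ext t
        simp only [Finset.mem_filter, Finset.mem_univ, true_and, Finset.mem_insert,
          Finset.mem_singleton, Fin.ext_iff]
        omega
      have h2 := Finset.card_filter_add_card_filter_not
        (s := (Finset.univ : Finset (Fin (k+1)))) (p := fun t => 2 ≤ t.val)
      rw [this] at h2
      have h3 : ({(⟨0, by omega⟩ : Fin (k+1)), ⟨1, by omega⟩} : Finset (Fin (k+1))).card = 2 := by
        rw [Finset.card_insert_of_notMem (by simp [Fin.ext_iff]), Finset.card_singleton]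
      rw [h3, Finset.card_univ, Fintype.card_fin] at h2
      omega
    rw [hset, Finset.card_insert_of_notMem hnotmem, Finset.card_product,
      Finset.card_singleton, hcard]
    omega
lemma sharp_connected_compl {k : ℕ} (S : Set (Fin 2 × Fin (k + 1)))
    (hhub : ∀ i : Fin 2, ∃ h : Fin 2 × Fin (k + 1), h.1 = i ∧ h ∉ S ∧
      ∀ x : Fin 2 × Fin (k + 1), x ∉ S → x.1 = i → x ≠ h → (sharpGraph k).Adj h x)
    (hcross : ∃ t : Fin (k + 1), t.val ≤ 1 ∧ ((0 : Fin 2), t) ∉ S ∧ ((1 : Fin 2), t) ∉ S) :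
    ((sharpGraph k).induce Sᶜ).Connected := by
  obtain ⟨h0, hh01, hh0S, hh0adj⟩ := hhub 0
  obtain ⟨h1, hh11, hh1S, hh1adj⟩ := hhub 1
  obtain ⟨t, ht, ht0, ht1⟩ := hcross
  set I := (sharpGraph k).induce Sᶜ with hI
  have reach : ∀ (i : Fin 2) (h : Fin 2 × Fin (k + 1)) (hh : h ∉ S),
      h.1 = i → (∀ x : Fin 2 × Fin (k + 1), x ∉ S → x.1 = i → x ≠ h → (sharpGraph k).Adj h x) →
      ∀ (x : Fin 2 × Fin (k + 1)) (hx : x ∉ S), x.1 = i →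
      I.Reachable ⟨x, hx⟩ ⟨h, hh⟩ := by
    intro i h hh hhi hadj x hx hxi
    by_cases hxh : x = h
    · subst hxh; rfl
    · have : I.Adj ⟨h, hh⟩ ⟨x, hx⟩ := by
        simp only [hI, induce_eq_coe_induce_top, Subgraph.coe_adj, Subgraph.induce_adj]
        exact ⟨hh, hx, hadj x hx hxi hxh⟩
      exact this.reachable.symm
  have key : ∀ (x : Fin 2 × Fin (k + 1)) (hx : x ∉ S), I.Reachable ⟨x, hx⟩ ⟨h0, hh0S⟩ := by
    intro x hx
    have hx1 : x.1 = 0 ∨ x.1 = 1 := by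
      have := x.1.isLt
      rcases (by omega : x.1.val = 0 ∨ x.1.val = 1) with h | h
      · exact Or.inl (Fin.ext h)
      · exact Or.inr (Fin.ext h)
    have bridge : I.Reachable ⟨h1, hh1S⟩ ⟨h0, hh0S⟩ := by
      have r1 : I.Reachable ⟨((1 : Fin 2), t), ht1⟩ ⟨h1, hh1S⟩ :=
        reach 1 h1 hh1S hh11 hh1adj _ ht1 rfl
      have r0 : I.Reachable ⟨((0 : Fin 2), t), ht0⟩ ⟨h0, hh0S⟩ :=
        reach 0 h0 hh0S hh01 hh0adj _ ht0 rfl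
      have rcross : I.Adj ⟨((1 : Fin 2), t), ht1⟩ ⟨((0 : Fin 2), t), ht0⟩ := by
        simp only [hI, induce_eq_coe_induce_top, Subgraph.coe_adj, Subgraph.induce_adj]
        exact ⟨ht1, ht0, adj_cross (by simp [Fin.ext_iff]) ht⟩
      exact r1.symm.trans (rcross.reachable.trans r0)
    rcases hx1 with h | h
    · exact reach 0 h0 hh0S hh01 hh0adj x hx h
    · exact (reach 1 h1 hh1S hh11 hh1adj x hx h).trans bridge
  rw [connected_iff]
  constructor
  · intro x y
    obtain ⟨x, hx⟩ := x
    obtain ⟨y, hy⟩ := y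
    exact (key x hx).trans (key y hy).symm
  · exact ⟨⟨h0, hh0S⟩⟩
lemma walk_cross_parity {V : Type*} {G : SimpleGraph V} (f : V → Bool) {x y : V}
    (w : G.Walk x y) :
    (w.darts.countP fun d => f d.fst != f d.snd) % 2 = (if f x = f y then 0 else 1) := by
  induction w with
  | nil => simp
  | @cons u v y h p ih =>
    rw [Walk.darts_cons, List.countP_cons]
    cases hfu : f u <;> cases hfv : f v <;> cases hfy : f y <;>
      simp only [hfu, hfv, hfy] at ih ⊢ <;> simp at ih ⊢ <;> omega

lemma walk_same_side {V : Type*} {G : SimpleGraph V} (f : V → Bool) {x y : V} (w : G.Walk x y)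
    (h : ∀ d ∈ w.darts, f d.fst = f d.snd) : ∀ p ∈ w.support, f p = f x := by
  induction w with
  | nil => intro p hp; simp at hp; subst hp; rfl
  | @cons u v y hadj p ih =>
    intro q hq
    rw [Walk.support_cons, List.mem_cons] at hq
    have huv : f u = f v := h ⟨(u, v), hadj⟩ (by rw [Walk.darts_cons]; exact List.mem_cons_self)
    rcases hq with rfl | hq
    · rfl
    · rw [ih (fun d hd => h d (by rw [Walk.darts_cons]; exact List.mem_cons_of_mem _ hd)) q hq]
      exact huv.symm

lemma eq_of_countP_le_one {α : Type*} {l : List α} {p : α → Bool} (h : l.countP p ≤ 1)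
    {a b : α} (ha : a ∈ l) (hb : b ∈ l) (hpa : p a) (hpb : p b) : a = b := by
  rw [List.countP_eq_length_filter] at h
  have ha' : a ∈ l.filter p := List.mem_filter.mpr ⟨ha, hpa⟩
  have hb' : b ∈ l.filter p := List.mem_filter.mpr ⟨hb, hpb⟩
  rcases hl : l.filter p with _ | ⟨c, tl⟩
  · rw [hl] at ha'; simp at ha'
  · rw [hl] at h ha' hb'
    simp only [List.length_cons] at h
    have : tl = [] := List.eq_nil_of_length_eq_zero (by omega)
    subst this
    simp only [List.mem_singleton] at ha' hb'
    rw [ha', hb']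

lemma ham_countP_snd {V : Type*} [DecidableEq V] {G : SimpleGraph V} {a : V} {c : G.Walk a a}
    (hc : c.IsHamiltonianCycle) (v : V) :
    (c.darts.countP fun d => decide (d.snd = v)) = 1 := by
  have h1 : (c.darts.map (·.snd)).count v = 1 := by
    rw [Walk.map_snd_darts, ← Walk.support_tail_of_not_nil c hc.1.not_nil]
    exact hc.isHamiltonian_tail v
  rw [List.count_eq_countP, List.countP_map] at h1
  rw [← h1]
  apply List.countP_congr
  intro d _
  simp only [Function.comp, beq_iff_eq, decide_eq_true_eq]

lemma ham_countP_fst {V : Type*} [DecidableEq V] {G : SimpleGraph V} {a : V} {c : G.Walk a a}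
    (hc : c.IsHamiltonianCycle) (v : V) :
    (c.darts.countP fun d => decide (d.fst = v)) = 1 := by
  have happ : c.darts.map (·.fst) ++ [a] = c.support := Walk.map_fst_darts_append c
  have hcount : (c.darts.map (·.fst)).count v + ([a] : List V).count v = c.support.count v := by
    rw [← List.count_append, happ]
  have h2 : (c.darts.map (·.fst)).count v = 1 := by
    by_cases hva : v = a
    · subst hva
      rw [hc.count_support_self, List.count_singleton', if_pos rfl] at hcount
      omega
    · rw [hc.support_count_of_ne (fun hh => hva hh.symm)] at hcount
      rw [List.count_singleton', if_neg (fun hh => hva hh.symm)] at hcount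
      omega
  rw [List.count_eq_countP, List.countP_map] at h2
  rw [← h2]
  apply List.countP_congr
  intro d _
  simp only [Function.comp, beq_iff_eq, decide_eq_true_eq]
lemma no_ham {k : ℕ} (hk : 3 ≤ k) (u v z : Fin 2 × Fin (k + 1))
    (hu1 : u.1 = 0) (hv1 : v.1 = 0) (hz1 : z.1 = 0)
    (hv2 : v.2.val = 0) (hu2 : 2 ≤ u.2.val) (hz2 : 2 ≤ z.2.val) (huz : u ≠ z) :
    ¬ ∃ (a : Fin 2 × Fin (k + 1)) (c : (sharpGraph k).Walk a a),
        c.IsHamiltonianCycle ∧ s(u, v) ∈ c.edges ∧ s(v, z) ∈ c.edges := by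
  classical
  rintro ⟨a, c, hc, h1, h2⟩
  set f : Fin 2 × Fin (k + 1) → Bool := fun x => decide (x.1 = 0) with hf
  set a2 : Fin 2 × Fin (k + 1) := ((1 : Fin 2), ⟨0, by omega⟩) with ha2
  have hv0 : v = ((0 : Fin 2), (⟨0, by omega⟩ : Fin (k + 1))) :=
    Prod.ext hv1 (Fin.ext (by simpa using hv2))
  -- there is a crossing dart
  have hex_cross : ∃ d ∈ c.darts, (f d.fst != f d.snd) = true := by
    by_contra hno
    push_neg at hno
    have hall : ∀ d ∈ c.darts, f d.fst = f d.snd := by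
      intro d hd
      have := hno d hd
      simpa [bne_iff_ne, not_not] using this
    have hv' := walk_same_side f c hall v (hc.mem_support v)
    have ha' := walk_same_side f c hall a2 (hc.mem_support a2)
    have hfv : f v = true := by simp [hf, hv1]
    have hfa2 : f a2 = false := by
      rw [hf, ha2]
      simp only [decide_eq_false_iff_not]
      exact fun hh => absurd (congrArg Fin.val hh) (by simp)
    rw [hfv] at hv'
    rw [hfa2] at ha'
    rw [← hv'] at ha'
    exact Bool.false_ne_true ha'
  -- parity: even number of crossing darts
  have hpar := walk_cross_parity f c
  rw [if_pos rfl] at hpar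
  have hpos : 0 < c.darts.countP fun d => f d.fst != f d.snd :=
    List.countP_pos_iff.mpr hex_cross
  have h2le : 2 ≤ c.darts.countP fun d => f d.fst != f d.snd := by omega
  set L := c.darts.filter (fun d => f d.fst != f d.snd) with hL
  have hlen : 2 ≤ L.length := by
    rw [hL, ← List.countP_eq_length_filter]
    exact h2le
  have hmapE : c.edges = c.darts.map SimpleGraph.Dart.edge := rfl
  have hnodupE : c.edges.Nodup := hc.isCycle.isCircuit.isTrail.edges_nodup
  have hnodupD : c.darts.Nodup := List.Nodup.of_map _ (hmapE ▸ hnodupE)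
  have hinj : ∀ d ∈ c.darts, ∀ d' ∈ c.darts, d.edge = d'.edge → d = d' := by
    intro d hd d' hd' h
    exact List.inj_on_of_nodup_map (hmapE ▸ hnodupE) hd hd' h
  have hDmem : ∀ d ∈ L, d ∈ c.darts ∧ (f d.fst != f d.snd) = true := by
    intro d hd
    rw [hL] at hd
    exact ⟨(List.mem_filter.mp hd).1, (List.mem_filter.mp hd).2⟩
  rcases hL' : L with _ | ⟨d₁, L₂⟩
  · rw [hL'] at hlen; simp at hlen
  rcases hL₂ : L₂ with _ | ⟨d₂, L₃⟩
  · rw [hL', hL₂] at hlen; simp at hlen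
  have hd₁L : d₁ ∈ L := by rw [hL']; exact List.mem_cons_self
  have hd₂L : d₂ ∈ L := by
    rw [hL', hL₂]
    exact List.mem_cons_of_mem _ List.mem_cons_self
  have hnodupL : L.Nodup := hnodupD.filter _
  have hne12 : d₁ ≠ d₂ := by
    rw [hL', hL₂] at hnodupL
    intro hcon
    exact (List.nodup_cons.mp hnodupL).1 (hcon ▸ (List.mem_cons_self (a := d₂) (l := L₃)))
  -- classification of crossing darts
  have hclass : ∀ d : (sharpGraph k).Dart, d ∈ c.darts → (f d.fst != f d.snd) = true →
      d.edge = s(((0 : Fin 2), (⟨0, by omega⟩ : Fin (k + 1))), ((1 : Fin 2), ⟨0, by omega⟩)) ∨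
      d.edge = s(((0 : Fin 2), (⟨1, by omega⟩ : Fin (k + 1))), ((1 : Fin 2), ⟨1, by omega⟩)) := by
    intro d hd hfd
    have hne : d.fst.1 ≠ d.snd.1 := by
      rw [bne_iff_ne] at hfd
      intro hcc
      exact hfd (by simp [hf, hcc])
    have hadj := d.adj
    rw [sharp_adj] at hadj
    rcases hadj.2 with ⟨hcc, -⟩ | ⟨-, heq2, hle⟩
    · exact absurd hcc hne
    have hvne : d.fst.1.val ≠ d.snd.1.val := fun hh => hne (Fin.ext hh)
    have hlt1 := d.fst.1.isLt
    have hlt2 := d.snd.1.isLt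
    have hedge : d.edge = s(d.fst, d.snd) := rfl
    have hkey : d.edge = s(((0 : Fin 2), d.fst.2), ((1 : Fin 2), d.fst.2)) := by
      by_cases hc0 : d.fst.1.val = 0
      · have hfst : d.fst = ((0 : Fin 2), d.fst.2) :=
          Prod.ext (Fin.ext (by simp [hc0])) rfl
        have hsnd : d.snd = ((1 : Fin 2), d.fst.2) :=
          Prod.ext (Fin.ext (by simp; omega)) heq2.symm
        rw [hedge, hfst, hsnd]
      · have hfst : d.fst = ((1 : Fin 2), d.fst.2) :=
          Prod.ext (Fin.ext (by simp; omega)) rfl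
        have hsnd : d.snd = ((0 : Fin 2), d.fst.2) :=
          Prod.ext (Fin.ext (by simp; omega)) heq2.symm
        rw [hedge, hfst, hsnd]
        exact Sym2.eq_swap
    rcases (by omega : d.fst.2.val = 0 ∨ d.fst.2.val = 1) with h0 | h0
    · left
      rw [hkey]
      have : d.fst.2 = (⟨0, by omega⟩ : Fin (k + 1)) := Fin.ext (by simpa using h0)
      rw [this]
    · right
      rw [hkey]
      have : d.fst.2 = (⟨1, by omega⟩ : Fin (k + 1)) := Fin.ext (by simpa using h0)
      rw [this]
  have hcl₁ := hclass d₁ (hDmem _ hd₁L).1 (hDmem _ hd₁L).2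
  have hcl₂ := hclass d₂ (hDmem _ hd₂L).1 (hDmem _ hd₂L).2
  have hne_e : d₁.edge ≠ d₂.edge := fun h => hne12 (hinj _ (hDmem _ hd₁L).1 _ (hDmem _ hd₂L).1 h)
  have hE0mem : s(v, a2) ∈ c.edges := by
    have hE0 : s(v, a2) =
        s(((0 : Fin 2), (⟨0, by omega⟩ : Fin (k + 1))), ((1 : Fin 2), ⟨0, by omega⟩)) := by
      rw [hv0, ha2]
    rw [hE0, hmapE]
    rcases hcl₁ with he | he
    · exact he ▸ List.mem_map_of_mem (f := SimpleGraph.Dart.edge) (hDmem _ hd₁L).1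
    · rcases hcl₂ with he' | he'
      · exact he' ▸ List.mem_map_of_mem (f := SimpleGraph.Dart.edge) (hDmem _ hd₂L).1
      · exact absurd (he.trans he'.symm) hne_e
  -- distinctness of the three edges at v
  have huv : u ≠ v := fun h => by rw [h] at hu2; omega
  have hzv : z ≠ v := fun h => by rw [h] at hz2; omega
  have hua2 : u ≠ a2 := by
    intro h
    have := congrArg (fun p => (Prod.fst p).val) h
    simp only [ha2] at this
    rw [hu1] at this
    simp at this
  have hza2 : z ≠ a2 := by
    intro h
    have := congrArg (fun p => (Prod.fst p).val) h
    simp only [ha2] at this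
    rw [hz1] at this
    simp at this
  have hva2 : v ≠ a2 := by
    intro h
    have := congrArg (fun p => (Prod.fst p).val) h
    simp only [ha2] at this
    rw [hv1] at this
    simp at this
  have hd12 : s(u, v) ≠ s(v, z) := by
    intro hhh
    rw [Sym2.eq_iff] at hhh
    revert hhh
    rintro (⟨hh, -⟩ | ⟨hh, -⟩)
    · exact huv hh
    · exact huz hh
  have hd13 : s(u, v) ≠ s(v, a2) := by
    intro hhh
    rw [Sym2.eq_iff] at hhh
    revert hhh
    rintro (⟨hh, -⟩ | ⟨hh, -⟩)
    · exact huv hh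
    · exact hua2 hh
  have hd23 : s(v, z) ≠ s(v, a2) := by
    intro hhh
    rw [Sym2.eq_iff] at hhh
    revert hhh
    rintro (⟨-, hh⟩ | ⟨hh, hh'⟩)
    · exact hza2 hh
    · exact hva2 hh
  -- darts for the three edges
  have hget : ∀ e ∈ c.edges, ∃ d ∈ c.darts, d.edge = e := by
    intro e he
    rw [hmapE] at he
    exact List.mem_map.mp he
  obtain ⟨D1, hD1, hDe1⟩ := hget _ h1
  obtain ⟨D2, hD2, hDe2⟩ := hget _ h2
  obtain ⟨D3, hD3, hDe3⟩ := hget _ hE0mem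
  have hin : ∀ (D : (sharpGraph k).Dart) (x : Fin 2 × Fin (k + 1)), v ∈ D.edge →
      D.fst = v ∨ D.snd = v := by
    intro D x hmem
    have : v ∈ s(D.fst, D.snd) := hmem
    rw [Sym2.mem_iff] at this
    rcases this with h | h
    · exact Or.inl h.symm
    · exact Or.inr h.symm
  have hvD1 : D1.fst = v ∨ D1.snd = v := hin D1 v (by rw [show D1.edge = s(D1.fst, D1.snd) from rfl] at hDe1 ⊢; rw [hDe1]; simp)
  have hvD2 : D2.fst = v ∨ D2.snd = v := hin D2 v (by rw [show D2.edge = s(D2.fst, D2.snd) from rfl] at hDe2 ⊢; rw [hDe2]; simp)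
  have hvD3 : D3.fst = v ∨ D3.snd = v := hin D3 v (by rw [show D3.edge = s(D3.fst, D3.snd) from rfl] at hDe3 ⊢; rw [hDe3]; simp)
  have uF : ∀ x ∈ c.darts, ∀ y ∈ c.darts, x.fst = v → y.fst = v → x = y := by
    intro x hx y hy hxv hyv
    exact eq_of_countP_le_one (le_of_eq (ham_countP_fst hc v)) hx hy
      (by simp [hxv]) (by simp [hyv])
  have uS : ∀ x ∈ c.darts, ∀ y ∈ c.darts, x.snd = v → y.snd = v → x = y := by
    intro x hx y hy hxv hyv
    exact eq_of_countP_le_one (le_of_eq (ham_countP_snd hc v)) hx hy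
      (by simp [hxv]) (by simp [hyv])
  rcases hvD1 with p1 | p1 <;> rcases hvD2 with p2 | p2 <;> rcases hvD3 with p3 | p3
  · exact hd12 (by rw [← hDe1, ← hDe2, uF D1 hD1 D2 hD2 p1 p2])
  · exact hd12 (by rw [← hDe1, ← hDe2, uF D1 hD1 D2 hD2 p1 p2])
  · exact hd13 (by rw [← hDe1, ← hDe3, uF D1 hD1 D3 hD3 p1 p3])
  · exact hd23 (by rw [← hDe2, ← hDe3, uS D2 hD2 D3 hD3 p2 p3])
  · exact hd23 (by rw [← hDe2, ← hDe3, uF D2 hD2 D3 hD3 p2 p3])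
  · exact hd13 (by rw [← hDe1, ← hDe3, uS D1 hD1 D3 hD3 p1 p3])
  · exact hd12 (by rw [← hDe1, ← hDe2, uS D1 hD1 D2 hD2 p1 p2])
  · exact hd12 (by rw [← hDe1, ← hDe2, uS D1 hD1 D2 hD2 p1 p2])
lemma hub_adj {k : ℕ} {i : Fin 2} {j : Fin (k + 1)} (hj : 2 ≤ j.val)
    {x : Fin 2 × Fin (k + 1)} (hxi : x.1 = i) (hxne : x ≠ (i, j)) :
    (sharpGraph k).Adj (i, j) x := by
  obtain ⟨x1, x2⟩ := x
  simp only at hxi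
  subst hxi
  exact adj_same (fun h => hxne (by rw [h])) (Or.inl hj)

theorem statement8' (k : ℕ) (hk : 3 ≤ k) :
    IsKConnected 2 (sharpGraph k) ∧
    (sharpGraph k).IsRegularOfDegree k ∧
    Fintype.card (Fin 2 × Fin (k + 1)) = 2 * k + 2 ∧
    ∃ u v z : Fin 2 × Fin (k + 1),
      (sharpGraph k).Adj u v ∧ (sharpGraph k).Adj v z ∧ u ≠ z ∧
      ((sharpGraph k).induce ({u, v, z} : Set (Fin 2 × Fin (k + 1)))ᶜ).Connected ∧
      ¬ ∃ (a : Fin 2 × Fin (k + 1)) (c : (sharpGraph k).Walk a a),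
          c.IsHamiltonianCycle ∧ s(u, v) ∈ c.edges ∧ s(v, z) ∈ c.edges := by
  have hcard : Fintype.card (Fin 2 × Fin (k + 1)) = 2 * k + 2 := by
    rw [Fintype.card_prod, Fintype.card_fin, Fintype.card_fin]
    ring
  refine ⟨⟨by omega, ?_⟩, sharp_regular hk, hcard, ?_⟩
  · -- 2-connectedness
    intro S hS
    have hsub : S.Subsingleton := by
      by_contra hcon
      rw [Set.not_subsingleton_iff] at hcon
      rw [← Set.nontrivial_coe_sort] at hcon
      have := Finite.one_lt_card_iff_nontrivial.mpr hcon
      omega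
    apply sharp_connected_compl
    · intro i
      by_cases h2 : (i, (⟨2, by omega⟩ : Fin (k + 1))) ∈ S
      · refine ⟨(i, (⟨3, by omega⟩ : Fin (k + 1))), rfl, ?_, ?_⟩
        · intro h3
          have := hsub h3 h2
          rw [Prod.ext_iff, Fin.ext_iff] at this
          simp at this
        · intro x hx hxi hxne
          exact hub_adj (by simp) hxi hxne
      · exact ⟨(i, (⟨2, by omega⟩ : Fin (k + 1))), rfl, h2,
          fun x hx hxi hxne => hub_adj (by simp) hxi hxne⟩
    · by_cases h0 : ((0 : Fin 2), (⟨0, by omega⟩ : Fin (k + 1))) ∈ S ∨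
          ((1 : Fin 2), (⟨0, by omega⟩ : Fin (k + 1))) ∈ S
      · refine ⟨⟨1, by omega⟩, by simp, ?_, ?_⟩
        · intro hmem
          rcases h0 with h0 | h0 <;> {
            have := hsub hmem h0
            rw [Prod.ext_iff, Fin.ext_iff, Fin.ext_iff] at this
            simp at this }
        · intro hmem
          rcases h0 with h0 | h0 <;> {
            have := hsub hmem h0
            rw [Prod.ext_iff, Fin.ext_iff, Fin.ext_iff] at this
            simp at this }
      · push_neg at h0
        exact ⟨⟨0, by omega⟩, by simp, h0.1, h0.2⟩
  · -- the path u v z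
    refine ⟨((0 : Fin 2), (⟨2, by omega⟩ : Fin (k + 1))),
      ((0 : Fin 2), (⟨0, by omega⟩ : Fin (k + 1))),
      ((0 : Fin 2), (⟨3, by omega⟩ : Fin (k + 1))), ?_, ?_, ?_, ?_, ?_⟩
    · exact adj_same (by simp [Fin.ext_iff]) (Or.inl (by simp))
    · exact adj_same (by simp [Fin.ext_iff]) (Or.inr (by simp))
    · simp [Prod.ext_iff, Fin.ext_iff]
    · apply sharp_connected_compl
      · intro i
        have hi : i.val = 0 ∨ i.val = 1 := by have := i.isLt; omega
        rcases hi with hi | hi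
        · have hi0 : i = 0 := Fin.ext (by simpa using hi)
          subst hi0
          refine ⟨((0 : Fin 2), (⟨1, by omega⟩ : Fin (k + 1))), rfl, ?_, ?_⟩
          · simp [Set.mem_insert_iff, Set.mem_singleton_iff, Prod.ext_iff, Fin.ext_iff]
          · rintro ⟨x1, x2⟩ hx hxi hxne
            simp only at hxi
            subst hxi
            rw [Set.mem_insert_iff, Set.mem_insert_iff, Set.mem_singleton_iff] at hx
            have hx2 : x2.val ≠ 2 := fun hh =>
              hx (Or.inl (Prod.ext rfl (Fin.ext (by simpa using hh))))
            have hx0 : x2.val ≠ 0 := fun hh =>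
              hx (Or.inr (Or.inl (Prod.ext rfl (Fin.ext (by simpa using hh)))))
            apply adj_same
            · intro hh
              exact hxne (by rw [← hh])
            · right
              have h1 : x2.val ≠ 1 := by
                intro hh
                exact hxne (Prod.ext rfl (Fin.ext (by simpa using hh)))
              omega
        · have hi1 : i = 1 := Fin.ext (by simpa using hi)
          subst hi1
          refine ⟨((1 : Fin 2), (⟨2, by omega⟩ : Fin (k + 1))), rfl, ?_, ?_⟩
          · simp [Set.mem_insert_iff, Set.mem_singleton_iff, Prod.ext_iff, Fin.ext_iff]
          · intro x hx hxi hxne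
            exact hub_adj (by simp) hxi hxne
      · refine ⟨⟨1, by omega⟩, by simp, ?_, ?_⟩
        · simp [Set.mem_insert_iff, Set.mem_singleton_iff, Prod.ext_iff, Fin.ext_iff]
        · simp [Set.mem_insert_iff, Set.mem_singleton_iff, Prod.ext_iff, Fin.ext_iff]
    · exact no_ham hk _ _ _ rfl rfl rfl rfl (by simp) (by simp)
        (by simp [Prod.ext_iff, Fin.ext_iff])

/-- **Sharpness of the bound `2k + 1`.** For every `k ≥ 3` the graph built from two
copies of `K_{k+1}` minus an edge by joining them with the edges `a₁a₂` and `b₁b₂` is a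
`2`-connected, `k`-regular graph on `2k + 2` vertices that has a 2-path `P = uvz` with
`G - {u, v, z}` connected which is contained in no Hamiltonian cycle of `G`. -/
theorem statement8 (k : ℕ) (hk : 3 ≤ k) :
    IsKConnected 2 (sharpGraph k) ∧
    (sharpGraph k).IsRegularOfDegree k ∧
    Fintype.card (Fin 2 × Fin (k + 1)) = 2 * k + 2 ∧
    ∃ u v z : Fin 2 × Fin (k + 1),
      (sharpGraph k).Adj u v ∧ (sharpGraph k).Adj v z ∧ u ≠ z ∧
      ((sharpGraph k).induce ({u, v, z} : Set (Fin 2 × Fin (k + 1)))ᶜ).Connected ∧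
      ¬ ∃ (a : Fin 2 × Fin (k + 1)) (c : (sharpGraph k).Walk a a),
          c.IsHamiltonianCycle ∧ s(u, v) ∈ c.edges ∧ s(v, z) ∈ c.edges := by
  exact statement8' k hk
end

section
/- Let G be a connected graph, let P = uvz be a path of G, and let G₁ be the graph obtained from G by deleting the edges uv and vz and adding two new vertices w₁ and w₂ together with the edges uw₁, w₁v, vw₂, w₂z. Then G has a Hamiltonian cycle containing the path P if and only if G₁ has a Hamiltonian cycle. -/
open SimpleGraph

/-- The graph `G₁` obtained from `G` by deleting the edges `uv` and `vz` of the path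
`P = uvz` and adding two new vertices `w₁ = Sum.inr 0` and `w₂ = Sum.inr 1` together
with the edges `uw₁`, `w₁v`, `vw₂`, `w₂z` (i.e. subdividing each edge of `P` once). -/
def subdividePath {V : Type*} [DecidableEq V] (G : SimpleGraph V) (u v z : V) :
    SimpleGraph (V ⊕ Fin 2) :=
  SimpleGraph.fromRel (fun x y =>
    (∃ a b : V, x = Sum.inl a ∧ y = Sum.inl b ∧ G.Adj a b ∧
        s(a, b) ≠ s(u, v) ∧ s(a, b) ≠ s(v, z)) ∨
    (x = Sum.inl u ∧ y = Sum.inr 0) ∨ (x = Sum.inl v ∧ y = Sum.inr 0) ∨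
    (x = Sum.inl v ∧ y = Sum.inr 1) ∨ (x = Sum.inl z ∧ y = Sum.inr 1))

namespace Statement16Aux

open Sum List

section Aux
variable {V : Type*} [DecidableEq V] {G : SimpleGraph V} {u v z : V}

lemma adj_inl_inl {a b : V} :
    (subdividePath G u v z).Adj (Sum.inl a) (Sum.inl b) ↔
      G.Adj a b ∧ s(a, b) ≠ s(u, v) ∧ s(a, b) ≠ s(v, z) := by
  simp only [subdividePath, fromRel_adj]
  constructor
  · rintro ⟨hne, (⟨a', b', ha, hb, h⟩ | h | h | h | h) | (⟨a', b', ha, hb, h⟩ | h | h | h | h)⟩ <;>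
      (simp_all [Sym2.eq_swap]; try exact h.1.symm)
  · rintro ⟨h, h1, h2⟩
    exact ⟨by simp [h.ne], Or.inl (Or.inl ⟨a, b, rfl, rfl, h, h1, h2⟩)⟩

lemma adj_w1 {x : V ⊕ Fin 2} (h : (subdividePath G u v z).Adj (Sum.inr 0) x) :
    x = Sum.inl u ∨ x = Sum.inl v := by
  rw [subdividePath, fromRel_adj] at h
  rcases h with ⟨hne, (⟨a', b', ha, hb, _⟩|⟨h1,h2⟩|⟨h1,h2⟩|⟨h1,h2⟩|⟨h1,h2⟩) |
    (⟨a', b', ha, hb, _⟩|⟨h1,h2⟩|⟨h1,h2⟩|⟨h1,h2⟩|⟨h1,h2⟩)⟩ <;> simp_all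

lemma adj_w2 {x : V ⊕ Fin 2} (h : (subdividePath G u v z).Adj (Sum.inr 1) x) :
    x = Sum.inl v ∨ x = Sum.inl z := by
  rw [subdividePath, fromRel_adj] at h
  rcases h with ⟨hne, (⟨a', b', ha, hb, _⟩|⟨h1,h2⟩|⟨h1,h2⟩|⟨h1,h2⟩|⟨h1,h2⟩) |
    (⟨a', b', ha, hb, _⟩|⟨h1,h2⟩|⟨h1,h2⟩|⟨h1,h2⟩|⟨h1,h2⟩)⟩ <;> simp_all

lemma adj_u_w1 (huv : G.Adj u v) : (subdividePath G u v z).Adj (Sum.inl u) (Sum.inr 0) := by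
  rw [subdividePath, fromRel_adj]; exact ⟨by simp, Or.inl (Or.inr (Or.inl ⟨rfl, rfl⟩))⟩

lemma adj_v_w1 (huv : G.Adj u v) : (subdividePath G u v z).Adj (Sum.inl v) (Sum.inr 0) := by
  rw [subdividePath, fromRel_adj]; exact ⟨by simp, Or.inl (Or.inr (Or.inr (Or.inl ⟨rfl, rfl⟩)))⟩

lemma adj_v_w2 (hvz : G.Adj v z) : (subdividePath G u v z).Adj (Sum.inl v) (Sum.inr 1) := by
  rw [subdividePath, fromRel_adj]
  exact ⟨by simp, Or.inl (Or.inr (Or.inr (Or.inr (Or.inl ⟨rfl, rfl⟩))))⟩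

lemma adj_z_w2 (hvz : G.Adj v z) : (subdividePath G u v z).Adj (Sum.inl z) (Sum.inr 1) := by
  rw [subdividePath, fromRel_adj]
  exact ⟨by simp, Or.inl (Or.inr (Or.inr (Or.inr (Or.inr ⟨rfl, rfl⟩))))⟩

end Aux

section Generic
variable {W : Type*} [DecidableEq W] {G' : SimpleGraph W} {a : W}

lemma ham_rotate {b : W} {c : G'.Walk a a} (hc : c.IsHamiltonianCycle) (h : b ∈ c.support) :
    (c.rotate b h).IsHamiltonianCycle := by
  rw [Walk.isHamiltonianCycle_iff_isCycle_and_support_count_tail_eq_one] at hc ⊢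
  refine ⟨hc.1.rotate h, fun t => ?_⟩
  rw [(Walk.support_rotate c b h).perm.count_eq]
  exact hc.2 t

lemma cycle_assemble {x y : W}
    (hx : G'.Adj a x) (hy : G'.Adj y a) (M : G'.Walk x y)
    (hnd : M.support.Nodup) (ha : a ∉ M.support)
    (hall : ∀ t, t ≠ a → t ∈ M.support) (hxy : x ≠ y) :
    (Walk.cons hx (M.append (Walk.cons hy Walk.nil))).IsHamiltonianCycle ∧
    (Walk.cons hx (M.append (Walk.cons hy Walk.nil))).edges
      = s(a, x) :: (M.edges ++ [s(y, a)]) := by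
  have hPsupp : (M.append (Walk.cons hy Walk.nil)).support = M.support ++ [a] := by
    simp [Walk.support_append]
  have hPedges : (M.append (Walk.cons hy Walk.nil)).edges = M.edges ++ [s(y, a)] := by
    simp [Walk.edges_append]
  refine ⟨?_, by simp [hPedges]⟩
  rw [Walk.isHamiltonianCycle_iff_isCycle_and_support_count_tail_eq_one]
  constructor
  · rw [Walk.cons_isCycle_iff]
    refine ⟨Walk.IsPath.mk' ?_, ?_⟩
    · rw [hPsupp]; simp [List.nodup_append, hnd, ha]; exact fun b hb h => ha (h ▸ hb)
    · rw [hPedges]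
      intro hmem
      rcases List.mem_append.mp hmem with h1 | h1
      · exact ha (M.fst_mem_support_of_mem_edges h1)
      · rw [List.mem_singleton, Sym2.eq_iff] at h1
        rcases h1 with ⟨h1, h2⟩ | ⟨_, h2⟩
        · exact hx.ne' h2
        · exact hxy h2
  · intro t
    have : (Walk.cons hx (M.append (Walk.cons hy Walk.nil))).support.tail
        = M.support ++ [a] := by rw [Walk.support_cons, List.tail_cons, hPsupp]
    rw [this, List.count_append]
    by_cases ht : t = a
    · subst ht
      rw [List.count_eq_zero_of_not_mem ha]
      simp
    · rw [List.count_eq_one_of_mem hnd (hall t ht)]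
      simp [Ne.symm ht, ht]

lemma cycle_decomp (c : G'.Walk a a) (hc : c.IsHamiltonianCycle) :
    ∃ (x y : W) (hx : G'.Adj a x) (hy : G'.Adj y a) (M : G'.Walk x y),
      M.support.Nodup ∧ a ∉ M.support ∧ (∀ t, t ≠ a → t ∈ M.support) ∧
      c.edges = s(a, x) :: (M.edges ++ [s(y, a)]) ∧
      s(a, x) ∉ M.edges ∧ s(y, a) ∉ M.edges ∧ x ≠ y := by
  obtain ⟨x, hx, q, rfl⟩ := Walk.not_nil_iff.mp hc.isCycle.not_nil
  have hqn : ¬ q.Nil := by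
    intro h
    have hxa : x = a := h.eq
    subst hxa
    exact G'.loopless.irrefl _ hx
  have hqrn : ¬ q.reverse.Nil := by
    rwa [Walk.nil_iff_length_eq, Walk.length_reverse, ← Walk.nil_iff_length_eq]
  obtain ⟨y, hy', s, hs⟩ := Walk.not_nil_iff.mp hqrn
  have hq : q = s.reverse.append (Walk.cons hy'.symm Walk.nil) := by
    have h2 := congrArg Walk.reverse hs
    rw [Walk.reverse_reverse, Walk.reverse_cons] at h2
    exact h2
  set M := s.reverse with hM
  have hsupp : q.support = M.support ++ [a] := by rw [hq]; simp [Walk.support_append]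
  have hedges : q.edges = M.edges ++ [s(y, a)] := by
    rw [hq]; simp [Walk.edges_append, Sym2.eq_swap]
  have hcount : ∀ t, (M.support ++ [a]).count t = 1 := by
    have := (Walk.isHamiltonianCycle_iff_isCycle_and_support_count_tail_eq_one.mp hc).2
    intro t
    have h3 := this t
    rwa [Walk.support_cons, List.tail_cons, hsupp] at h3
  have ha : a ∉ M.support := by
    have h4 := hcount a
    rw [List.count_append] at h4
    have h5 : List.count a [a] = 1 := by simp
    intro hmem
    have h6 := List.count_pos_iff.mpr hmem
    omega
  have hnd : M.support.Nodup := by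
    rw [List.nodup_iff_count_le_one]
    intro t
    have h4 := hcount t
    rw [List.count_append] at h4
    omega
  have hall : ∀ t, t ≠ a → t ∈ M.support := by
    intro t ht
    have h4 := hcount t
    rw [List.count_append] at h4
    have h5 : List.count t [a] = 0 := List.count_eq_zero_of_not_mem (by simp [ht])
    rw [← List.count_pos_iff]
    omega
  have hce : (Walk.cons hx q).edges = s(a, x) :: (M.edges ++ [s(y, a)]) := by
    rw [Walk.edges_cons, hedges]
  have htrail := hc.isCycle.isTrail.edges_nodup
  rw [hce] at htrail
  rw [List.nodup_cons, List.nodup_append] at htrail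
  obtain ⟨hn1, hn2, hn3, hn4⟩ := htrail
  have hax_ne : s(a, x) ∉ M.edges := fun h => hn1 (List.mem_append_left _ h)
  have haxya : s(a, x) ≠ s(y, a) := fun h => hn1 (List.mem_append_right _ (by simp [h]))
  have hya : s(y, a) ∉ M.edges := fun h => hn4 _ h _ (List.mem_singleton_self _) rfl
  refine ⟨x, y, hx, hy'.symm, M, hnd, ha, hall, hce, hax_ne, hya, ?_⟩
  intro hxyeq
  exact haxya (by rw [hxyeq, Sym2.eq_swap])

end Generic

section Aux2
variable {V : Type*} [DecidableEq V] {G : SimpleGraph V} {u v z : V}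

/-- Converting a walk in `G₁` avoiding the new vertices back to a walk in `G`. -/
lemma toG {x y : V ⊕ Fin 2} (q : (subdividePath G u v z).Walk x y) :
    ∀ {a b : V}, x = Sum.inl a → y = Sum.inl b → (∀ t ∈ q.support, ∃ s, t = Sum.inl s) →
    ∃ p : G.Walk a b, p.support.map Sum.inl = q.support ∧
      ∀ e ∈ p.edges, e ≠ s(u, v) ∧ e ≠ s(v, z) := by
  induction q with
  | nil =>
    rename_i w
    intro a b hx hy _
    have hab : a = b := by rw [hx] at hy; exact Sum.inl.inj hy
    subst hab hx
    exact ⟨Walk.nil, by simp, by simp⟩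
  | cons h q' ih =>
    rename_i w t y' -- w start, t next
    intro a b hx hy hall
    obtain ⟨c, hc⟩ := hall t (by simp)
    obtain ⟨p', hp1, hp2⟩ := ih hc hy (fun s hs => hall s (by simp [hs]))
    subst hx hc
    rw [adj_inl_inl] at h
    refine ⟨Walk.cons h.1 p', by simp [hp1], ?_⟩
    intro e he
    rw [Walk.edges_cons, List.mem_cons] at he
    rcases he with he | he
    · subst he; exact ⟨h.2.1, h.2.2⟩
    · exact hp2 e he

/-- In any path of `G₁` passing through `w₂` with endpoints different from `w₂`,
the two edges at `w₂` are forced. -/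
lemma mid_edge {c d : V ⊕ Fin 2} (r : (subdividePath G u v z).Walk c d)
    (hnd : r.support.Nodup) (hw : (Sum.inr 1 : V ⊕ Fin 2) ∈ r.support)
    (hc : c ≠ Sum.inr 1) (hd : d ≠ Sum.inr 1) :
    s(Sum.inl v, (Sum.inr 1 : V ⊕ Fin 2)) ∈ r.edges := by
  induction r with
  | nil => simp at hw; exact absurd hw.symm hc
  | cons h r' ih =>
    rename_i w t y'
    by_cases ht : t = Sum.inr 1
    · subst ht
      -- h : Adj w (inr 1), so w = inl v or inl z
      have hw' : w = Sum.inl v ∨ w = Sum.inl z := adj_w2 h.symm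
      have hr'n : ¬ r'.Nil := by
        intro hn
        exact hd hn.eq.symm
      obtain ⟨t₂, h₂, r₂, hr₂⟩ := Walk.not_nil_iff.mp hr'n
      have ht₂ : t₂ = Sum.inl v ∨ t₂ = Sum.inl z := adj_w2 h₂
      have hwt₂ : w ≠ t₂ := by
        intro hEq
        rw [Walk.support_cons, List.nodup_cons] at hnd
        apply hnd.1
        rw [hEq, hr₂]
        simp
      rcases hw' with rfl | rfl
      · simp
      · rcases ht₂ with rfl | rfl
        · have hswap : s(Sum.inl v, (Sum.inr 1 : V ⊕ Fin 2)) = s(Sum.inr 1, Sum.inl v) :=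
            Sym2.eq_swap
          rw [Walk.edges_cons, hr₂, Walk.edges_cons, hswap]
          exact List.mem_cons_of_mem _ List.mem_cons_self
        · exact absurd rfl hwt₂
    · have hw2 : (Sum.inr 1 : V ⊕ Fin 2) ∈ r'.support := by
        rw [Walk.support_cons, List.mem_cons] at hw
        rcases hw with hw | hw
        · exact absurd hw.symm hc
        · exact hw
      have := ih (by rw [Walk.support_cons, List.nodup_cons] at hnd; exact hnd.2) hw2 ht hd
      rw [Walk.edges_cons, List.mem_cons]
      exact Or.inr this

end Aux2

section GSide
variable {V : Type*} [DecidableEq V] {G : SimpleGraph V} {u v z : V}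

lemma G_iff (huv : G.Adj u v) (hvz : G.Adj v z) (huz : u ≠ z) :
    (∃ (a : V) (c : G.Walk a a),
        c.IsHamiltonianCycle ∧ s(u, v) ∈ c.edges ∧ s(v, z) ∈ c.edges) ↔
    (∃ m : G.Walk z u, m.support.Nodup ∧ v ∉ m.support ∧ (∀ t, t ≠ v → t ∈ m.support) ∧
      ∀ e ∈ m.edges, e ≠ s(u, v) ∧ e ≠ s(v, z)) := by
  constructor
  · rintro ⟨a, c, hc, he1, he2⟩
    have hv : v ∈ c.support := hc.mem_support v
    have hc₂ := ham_rotate hc hv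
    have he1' : s(u, v) ∈ (c.rotate v hv).edges := (Walk.rotate_edges c v hv).perm.mem_iff.mpr he1
    have he2' : s(v, z) ∈ (c.rotate v hv).edges := (Walk.rotate_edges c v hv).perm.mem_iff.mpr he2
    obtain ⟨x, y, hx, hy, M, hnd, ha, hall, hed, hn1, hn2, hxy⟩ := cycle_decomp _ hc₂
    rw [hed] at he1' he2'
    have hMe1 : s(u, v) ∉ M.edges := fun h => ha (M.snd_mem_support_of_mem_edges h)
    have hMe2 : s(v, z) ∉ M.edges := fun h => ha (M.fst_mem_support_of_mem_edges h)
    simp only [List.mem_cons, List.mem_append, List.mem_singleton, List.not_mem_nil,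
      or_false] at he1' he2'
    have huvvz : s(u, v) ≠ s(v, z) := by
      intro h
      rw [Sym2.eq_iff] at h
      rcases h with ⟨h, _⟩ | ⟨h, _⟩
      · exact huv.ne h
      · exact huz h
    rcases he1' with h1 | h1 | h1
    · -- s(u,v) = s(v,x) hence x = u
      have h2 : s(v, z) = s(y, v) := by
        rcases he2' with h2 | h2 | h2
        · exact absurd (h1.trans h2.symm) huvvz
        · exact absurd h2 hMe2
        · exact h2
      have hxu : x = u := by
        rw [Sym2.eq_iff] at h1
        rcases h1 with ⟨h, _⟩ | ⟨h, _⟩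
        · exact absurd h huv.ne
        · exact h.symm
      subst hxu
      have hyz : y = z := by
        rw [Sym2.eq_iff] at h2
        rcases h2 with ⟨h, h'⟩ | ⟨_, h'⟩
        · exact absurd h'.symm hvz.ne
        · exact h'.symm
      subst hyz
      refine ⟨M.reverse, by simp [hnd], by simp [ha], fun t ht => by simpa using hall t ht,
        fun e he => ?_⟩
      rw [Walk.edges_reverse, List.mem_reverse] at he
      exact ⟨fun h => hMe1 (h ▸ he), fun h => hMe2 (h ▸ he)⟩
    · exact absurd h1 hMe1
    · -- s(u,v) = s(y,v) hence y = u
      have h2 : s(v, z) = s(v, x) := by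
        rcases he2' with h2 | h2 | h2
        · exact h2
        · exact absurd h2 hMe2
        · exact absurd (h1.trans h2.symm) huvvz
      have hyu : y = u := by
        rw [Sym2.eq_iff] at h1
        rcases h1 with ⟨h, _⟩ | ⟨h, _⟩
        · exact h.symm
        · exact absurd h huv.ne
      subst hyu
      have hxz : x = z := by
        rw [Sym2.eq_iff] at h2
        rcases h2 with ⟨_, h'⟩ | ⟨_, h'⟩
        · exact h'.symm
        · exact absurd h'.symm hvz.ne
      subst hxz
      exact ⟨M, hnd, ha, hall, fun e he =>
        ⟨fun h => hMe1 (h ▸ he), fun h => hMe2 (h ▸ he)⟩⟩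
  · rintro ⟨m, hnd, ha, hall, hedges⟩
    obtain ⟨hham, hed⟩ := cycle_assemble hvz huv m hnd ha hall (fun h => huz h.symm)
    refine ⟨v, _, hham, ?_, ?_⟩ <;> rw [hed]
    · simp
    · simp

end GSide

section HSide
variable {V : Type*} [DecidableEq V] {G : SimpleGraph V} {u v z : V}

lemma extract_m (huv : G.Adj u v) (hvz : G.Adj v z)
    (r : (subdividePath G u v z).Walk (Sum.inl v) (Sum.inl u))
    (hnd : r.support.Nodup) (hw1 : (Sum.inr 0 : V ⊕ Fin 2) ∉ r.support)
    (hall : ∀ t, t ≠ Sum.inr 0 → t ∈ r.support) :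
    ∃ m : G.Walk z u, m.support.Nodup ∧ v ∉ m.support ∧ (∀ t, t ≠ v → t ∈ m.support) ∧
      ∀ e ∈ m.edges, e ≠ s(u, v) ∧ e ≠ s(v, z) := by
  have hw2 : (Sum.inr 1 : V ⊕ Fin 2) ∈ r.support := hall _ (by simp)
  have hedge := mid_edge r hnd hw2 (by simp) (by simp)
  have hrn : ¬ r.Nil := by
    intro h
    have : (Sum.inl v : V ⊕ Fin 2) = Sum.inl u := h.eq
    exact huv.ne (Sum.inl.inj this).symm
  obtain ⟨t, h₁, r₁, hr1⟩ := Walk.not_nil_iff.mp hrn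
  have hvnotr₁ : (Sum.inl v : V ⊕ Fin 2) ∉ r₁.support := by
    rw [hr1, Walk.support_cons, List.nodup_cons] at hnd
    exact hnd.1
  have ht : t = Sum.inr 1 := by
    rw [hr1, Walk.edges_cons, List.mem_cons] at hedge
    rcases hedge with h | h
    · rw [Sym2.eq_iff] at h
      rcases h with ⟨_, h'⟩ | ⟨_, h''⟩
      · exact h'.symm
      · exact absurd h'' (by simp)
    · exact absurd (r₁.fst_mem_support_of_mem_edges h) hvnotr₁
  subst ht
  have hr₁n : ¬ r₁.Nil := by
    intro h
    exact absurd h.eq (by simp)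
  obtain ⟨t₂, h₂, r₂, hr2⟩ := Walk.not_nil_iff.mp hr₁n
  have ht₂' : t₂ = Sum.inl z := by
    rcases adj_w2 h₂ with rfl | rfl
    · exact absurd (by rw [hr2]; simp : (Sum.inl v : V ⊕ Fin 2) ∈ r₁.support) hvnotr₁
    · rfl
  subst ht₂'
  have hsupp : r.support = Sum.inl v :: Sum.inr 1 :: r₂.support := by
    rw [hr1, hr2]; simp
  rw [hsupp] at hnd
  have hnd2 : r₂.support.Nodup := (hnd.of_cons).of_cons
  have hw2' : (Sum.inr 1 : V ⊕ Fin 2) ∉ r₂.support := by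
    have := hnd.of_cons
    rw [List.nodup_cons] at this
    exact this.1
  have hvr₂ : (Sum.inl v : V ⊕ Fin 2) ∉ r₂.support := by
    intro hmem
    exact hvnotr₁ (by rw [hr2, Walk.support_cons]; exact List.mem_cons_of_mem _ hmem)
  have hleft : ∀ t ∈ r₂.support, ∃ s, t = Sum.inl s := by
    rintro (s | i) htm
    · exact ⟨s, rfl⟩
    · exfalso
      fin_cases i
      · exact hw1 (by rw [hsupp]; exact List.mem_cons_of_mem _ (List.mem_cons_of_mem _ htm))
      · exact hw2' htm
  obtain ⟨m, hm1, hm2⟩ := toG r₂ rfl rfl hleft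
  refine ⟨m, ?_, ?_, ?_, hm2⟩
  · have h9 : (m.support.map (Sum.inl : V → V ⊕ Fin 2)).Nodup := by rw [hm1]; exact hnd2
    exact List.Nodup.of_map _ h9
  · intro hmem
    exact hvr₂ (by rw [← hm1]; exact List.mem_map_of_mem hmem)
  · intro t htv
    have hmem := hall (Sum.inl t) (by simp)
    rw [hsupp] at hmem
    simp only [List.mem_cons] at hmem
    rcases hmem with hmem | hmem | hmem
    · exact absurd (Sum.inl.inj hmem) htv
    · exact absurd hmem (by simp)
    · rw [← hm1] at hmem
      obtain ⟨s, hs1, hs2⟩ := List.mem_map.mp hmem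
      rwa [← Sum.inl.inj hs2]

lemma H_iff (huv : G.Adj u v) (hvz : G.Adj v z) (huz : u ≠ z) :
    (∃ (a : V ⊕ Fin 2) (c : (subdividePath G u v z).Walk a a), c.IsHamiltonianCycle) ↔
    (∃ m : G.Walk z u, m.support.Nodup ∧ v ∉ m.support ∧ (∀ t, t ≠ v → t ∈ m.support) ∧
      ∀ e ∈ m.edges, e ≠ s(u, v) ∧ e ≠ s(v, z)) := by
  constructor
  · rintro ⟨a, c, hc⟩
    have hw : (Sum.inr 0 : V ⊕ Fin 2) ∈ c.support := hc.mem_support _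
    obtain ⟨x, y, hx, hy, M, hnd, ha, hall, _, _, _, hxy⟩ :=
      cycle_decomp _ (ham_rotate hc hw)
    rcases adj_w1 hx with rfl | rfl <;> rcases adj_w1 hy.symm with rfl | rfl
    · exact absurd rfl hxy
    · exact extract_m huv hvz M.reverse (by simp [hnd]) (by simp [ha])
        (fun t ht => by simpa using hall t ht)
    · exact extract_m huv hvz M hnd ha hall
    · exact absurd rfl hxy
  · rintro ⟨m, hnd, ha, hallm, hedges⟩
    have hme : ∀ e ∈ m.edges, e ∉ ({s(u, v), s(v, z)} : Set (Sym2 V)) := by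
      intro e he
      simp only [Set.mem_insert_iff, Set.mem_singleton_iff]
      push_neg
      exact hedges e he
    let φ : G.deleteEdges {s(u, v), s(v, z)} →g subdividePath G u v z :=
      ⟨Sum.inl, by
        intro a b hab
        rw [deleteEdges_adj] at hab
        refine adj_inl_inl.mpr ⟨hab.1, ?_, ?_⟩ <;>
          · intro h
            apply hab.2
            simp [h]⟩
    let m' := (m.toDeleteEdges _ hme).map φ
    have hm'supp : m'.support = m.support.map Sum.inl := by
      simp only [m', Walk.support_map, Walk.toDeleteEdges, Walk.support_transfer]
      rfl
    have hMsupp : ((Walk.cons ((adj_z_w2 hvz).symm)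
        (m'.append (Walk.cons (adj_u_w1 huv) Walk.nil))) :
          (subdividePath G u v z).Walk (Sum.inr 1) (Sum.inr 0)).support
        = Sum.inr 1 :: (m.support.map Sum.inl ++ [Sum.inr 0]) := by
      rw [Walk.support_cons, Walk.support_append, hm'supp]
      simp
    have hres := cycle_assemble (adj_v_w2 hvz) ((adj_v_w1 huv).symm)
      (Walk.cons ((adj_z_w2 hvz).symm) (m'.append (Walk.cons (adj_u_w1 huv) Walk.nil)))
      (by
        rw [hMsupp, List.nodup_cons, List.nodup_append]
        refine ⟨by simp, hnd.map Sum.inl_injective, by simp, by simp⟩)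
      (by rw [hMsupp]; simp [ha])
      (by
        rintro (s | i) ht
        · rw [hMsupp]
          have hs : s ≠ v := fun h => ht (by rw [h])
          simp [hallm s hs]
        · fin_cases i
          · rw [hMsupp]; simp
          · rw [hMsupp]; simp)
      (by simp)
    exact ⟨Sum.inl v, _, hres.1⟩

end HSide

end Statement16Aux

open Statement16Aux in
/-- **The subdivision operation.** Let `G` be a connected graph, `P = uvz` a path of `G`,
and let `G₁` be obtained from `G` by subdividing the edges `uv` and `vz` with new
vertices `w₁` and `w₂`.  Then `G` has a Hamiltonian cycle containing `P` if and only if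
`G₁` is Hamiltonian. -/
theorem statement16 {V : Type*} [Fintype V] [DecidableEq V]
    (G : SimpleGraph V) (hconn : G.Connected)
    (u v z : V) (huv : G.Adj u v) (hvz : G.Adj v z) (huz : u ≠ z) :
    (∃ (a : V) (c : G.Walk a a),
        c.IsHamiltonianCycle ∧ s(u, v) ∈ c.edges ∧ s(v, z) ∈ c.edges) ↔
    (∃ (a : V ⊕ Fin 2) (c : (subdividePath G u v z).Walk a a), c.IsHamiltonianCycle) :=
  (G_iff huv hvz huz).trans (H_iff huv hvz huz).symm
end
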